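/- Removing a dominated Left option preserves equality: if G = {A, B, C, …| G^S | D, E, F, …} with A ≥ B, then G' = {A, C, …| G^S | D, E, F, …} satisfies G' = G. -/

import Mathlib

inductive SGame : Type where
  | mk (left right : List SGame) (score : ℝ)

namespace SGame

def leftOpts : SGame → List SGame | mk L _ _ => L
def rightOpts : SGame → List SGame | mk _ R _ => R
def score : SGame → ℝ | mk _ _ s => s

mutual
  /-- Optimal final score when Left moves first. -/
  def leftScore : SGame → ℝ
    | mk [] _ s => s
    | mk (g :: L) _ _ => maxRight g L
  termination_by G => sizeOf G
  decreasing_by all_goals (simp; try omega)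
  def maxRight : SGame → List SGame → ℝ
    | g, [] => rightScore g
    | g, h :: t => max (rightScore g) (maxRight h t)
  termination_by g l => 1 + sizeOf g + sizeOf l
  decreasing_by all_goals (simp; try omega)
  /-- Optimal final score when Right moves first. -/
  def rightScore : SGame → ℝ
    | mk _ [] s => s
    | mk _ (g :: R) _ => minLeft g R
  termination_by G => sizeOf G
  decreasing_by all_goals (simp; try omega)
  def minLeft : SGame → List SGame → ℝ
    | g, [] => leftScore g
    | g, h :: t => min (leftScore g) (minLeft h t)
  termination_by g l => 1 + sizeOf g + sizeOf l
  decreasing_by all_goals (simp; try omega)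
end

/-- Long-rule disjunctive sum. -/
def sum : SGame → SGame → SGame
  | mk L1 R1 s1, mk L2 R2 s2 =>
    mk ((L1.attach.map fun g => sum g.1 (mk L2 R2 s2)) ++
        (L2.attach.map fun h => sum (mk L1 R1 s1) h.1))
       ((R1.attach.map fun g => sum g.1 (mk L2 R2 s2)) ++
        (R2.attach.map fun h => sum (mk L1 R1 s1) h.1))
       (s1 + s2)
termination_by G H => sizeOf G + sizeOf H
decreasing_by
  all_goals simp
  · have := List.sizeOf_lt_of_mem g.2; omega
  · have := List.sizeOf_lt_of_mem h.2; omega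
  · have := List.sizeOf_lt_of_mem g.2; omega
  · have := List.sizeOf_lt_of_mem h.2; omega

end SGame

namespace SGame

/-- The game `{.|0|.}`. -/
def zero : SGame := mk [] [] 0

/-- Negation: `-G = {-G^R | -G^S | -G^L}`. -/
def neg : SGame → SGame
  | mk L R s =>
    mk (R.attach.map fun g => neg g.1) (L.attach.map fun g => neg g.1) (-s)
termination_by G => sizeOf G
decreasing_by
  all_goals (have := List.sizeOf_lt_of_mem g.2; simp; omega)

/-- Identity of game trees (options regarded as sets). -/
def Ident : SGame → SGame → Prop
  | mk L1 R1 s1, mk L2 R2 s2 =>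
    s1 = s2 ∧
    (∀ g ∈ L1.attach, ∃ h ∈ L2.attach, Ident g.1 h.1) ∧
    (∀ h ∈ L2.attach, ∃ g ∈ L1.attach, Ident g.1 h.1) ∧
    (∀ g ∈ R1.attach, ∃ h ∈ R2.attach, Ident g.1 h.1) ∧
    (∀ h ∈ R2.attach, ∃ g ∈ R1.attach, Ident g.1 h.1)
termination_by G H => sizeOf G + sizeOf H
decreasing_by
  all_goals
    (have := List.sizeOf_lt_of_mem g.2; have := List.sizeOf_lt_of_mem h.2
     simp; omega)

inductive Outcome : Type where
  | L | R | N | P | T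
deriving DecidableEq

/-- The outcome class of a game, determined by the signs of its final scores. -/
noncomputable def outcome (G : SGame) : Outcome :=
  if 0 < G.leftScore then
    (if 0 < G.rightScore then .L else if G.rightScore = 0 then .L else .N)
  else if G.leftScore = 0 then
    (if 0 < G.rightScore then .L else if G.rightScore = 0 then .T else .R)
  else
    (if 0 < G.rightScore then .P else .R)

/-- `G ≥ H`. -/
def Ge (G H : SGame) : Prop :=
  ∀ X : SGame,
    (0 ≤ (H.sum X).leftScore → 0 ≤ (G.sum X).leftScore) ∧
    (0 ≤ (H.sum X).rightScore → 0 ≤ (G.sum X).rightScore) ∧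
    (0 < (H.sum X).leftScore → 0 < (G.sum X).leftScore) ∧
    (0 < (H.sum X).rightScore → 0 < (G.sum X).rightScore)

/-- `G ≤ H`. -/
def Le (G H : SGame) : Prop :=
  ∀ X : SGame,
    ((H.sum X).leftScore ≤ 0 → (G.sum X).leftScore ≤ 0) ∧
    ((H.sum X).rightScore ≤ 0 → (G.sum X).rightScore ≤ 0) ∧
    ((H.sum X).leftScore < 0 → (G.sum X).leftScore < 0) ∧
    ((H.sum X).rightScore < 0 → (G.sum X).rightScore < 0)

/-- Game equality: same outcome in every disjunctive-sum context. -/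
def gameEq (G H : SGame) : Prop :=
  ∀ X : SGame, (G.sum X).outcome = (H.sum X).outcome

end SGame

namespace SGame

/-- Every score in the game tree of `G` satisfies `p`. -/
def AllScores (p : ℝ → Prop) : SGame → Prop
  | mk L R s =>
    p s ∧ (∀ g ∈ L.attach, AllScores p g.1) ∧ (∀ g ∈ R.attach, AllScores p g.1)
termination_by G => sizeOf G
decreasing_by all_goals (have := List.sizeOf_lt_of_mem g.2; simp; omega)

/-- `G ≡ H`: identical underlying game trees, with equal scores at all
termination vertices (vertices at which at least one player has no option,
i.e. where the play of some disjunctive sum can end). -/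
def Equiv : SGame → SGame → Prop
  | mk L1 R1 s1, mk L2 R2 s2 =>
    ((L1 = [] ∨ R1 = []) → s1 = s2) ∧
    (∀ g ∈ L1.attach, ∃ h ∈ L2.attach, Equiv g.1 h.1) ∧
    (∀ h ∈ L2.attach, ∃ g ∈ L1.attach, Equiv g.1 h.1) ∧
    (∀ g ∈ R1.attach, ∃ h ∈ R2.attach, Equiv g.1 h.1) ∧
    (∀ h ∈ R2.attach, ∃ g ∈ R1.attach, Equiv g.1 h.1)
termination_by G H => sizeOf G + sizeOf H
decreasing_by
  all_goals
    (have := List.sizeOf_lt_of_mem g.2; have := List.sizeOf_lt_of_mem h.2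
     simp; omega)

/-- `G` is in canonical form: hereditarily, no dominated and no reversible options. -/
def Canonical : SGame → Prop
  | mk L R s =>
    (∀ A ∈ L, ∀ B ∈ L, A ≠ B → ¬ Ge A B) ∧
    (∀ D ∈ R, ∀ E ∈ R, D ≠ E → ¬ Le D E) ∧
    (∀ A ∈ L, ∀ Ar ∈ A.rightOpts, ¬ Le Ar (mk L R s)) ∧
    (∀ D ∈ R, ∀ Dl ∈ D.leftOpts, ¬ Ge Dl (mk L R s)) ∧
    (∀ g ∈ L.attach, Canonical g.1) ∧ (∀ g ∈ R.attach, Canonical g.1)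
termination_by G => sizeOf G
decreasing_by all_goals (have := List.sizeOf_lt_of_mem g.2; simp; omega)

/-- One reduction step: removing a dominated option or bypassing a reversible
option, at the root or in some subposition. -/
inductive Step : SGame → SGame → Prop where
  | domL {L1 L2 : List SGame} {R : List SGame} {s : ℝ} {B : SGame} (A : SGame)
      (hA : A ∈ L1 ++ L2) (h : Ge A B) :
      Step (mk (L1 ++ B :: L2) R s) (mk (L1 ++ L2) R s)
  | domR {R1 R2 : List SGame} {L : List SGame} {s : ℝ} {E : SGame} (D : SGame)
      (hD : D ∈ R1 ++ R2) (h : Le D E) :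
      Step (mk L (R1 ++ E :: R2) s) (mk L (R1 ++ R2) s)
  | revL {L1 L2 : List SGame} {R : List SGame} {s : ℝ} {A Ar : SGame}
      (hAr : Ar ∈ A.rightOpts) (h : Le Ar (mk (L1 ++ A :: L2) R s)) :
      Step (mk (L1 ++ A :: L2) R s) (mk (L1 ++ Ar.leftOpts ++ L2) R s)
  | revR {R1 R2 : List SGame} {L : List SGame} {s : ℝ} {D Dl : SGame}
      (hDl : Dl ∈ D.leftOpts) (h : Ge Dl (mk L (R1 ++ D :: R2) s)) :
      Step (mk L (R1 ++ D :: R2) s) (mk L (R1 ++ Dl.rightOpts ++ R2) s)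
  | congL {g g' : SGame} {L1 L2 R : List SGame} {s : ℝ} (h : Step g g') :
      Step (mk (L1 ++ g :: L2) R s) (mk (L1 ++ g' :: L2) R s)
  | congR {g g' : SGame} {L R1 R2 : List SGame} {s : ℝ} (h : Step g g') :
      Step (mk L (R1 ++ g :: R2) s) (mk L (R1 ++ g' :: R2) s)

end SGame

namespace SGame

lemma sum_mk (L1 R1 : List SGame) (s1 : ℝ) (L2 R2 : List SGame) (s2 : ℝ) :
    sum (mk L1 R1 s1) (mk L2 R2 s2) =
      mk (L1.map (fun g => g.sum (mk L2 R2 s2)) ++ L2.map (fun h => (mk L1 R1 s1).sum h))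
         (R1.map (fun g => g.sum (mk L2 R2 s2)) ++ R2.map (fun h => (mk L1 R1 s1).sum h))
         (s1 + s2) := by
  rw [sum]
  simp [List.attach_map_val]

lemma leftScore_cons (g : SGame) (l R : List SGame) (s : ℝ) :
    leftScore (mk (g :: l) R s) = maxRight g l := by
  rw [leftScore]

lemma rightScore_nil (L : List SGame) (s : ℝ) : rightScore (mk L [] s) = s := by
  rw [rightScore]

lemma rightScore_cons (g : SGame) (l L : List SGame) (s : ℝ) :
    rightScore (mk L (g :: l) s) = minLeft g l := by
  rw [rightScore]

end SGame

namespace SGame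

lemma le_maxRight_iff (c : ℝ) : ∀ (l : List SGame) (g : SGame),
    c ≤ maxRight g l ↔ ∃ x ∈ g :: l, c ≤ rightScore x := by
  intro l
  induction l with
  | nil => intro g; rw [maxRight]; simp
  | cons a t ih =>
      intro g; rw [maxRight]
      simp [le_max_iff, ih a]

lemma lt_maxRight_iff (c : ℝ) : ∀ (l : List SGame) (g : SGame),
    c < maxRight g l ↔ ∃ x ∈ g :: l, c < rightScore x := by
  intro l
  induction l with
  | nil => intro g; rw [maxRight]; simp
  | cons a t ih =>
      intro g; rw [maxRight]
      simp [lt_max_iff, ih a]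

lemma le_minLeft_iff (c : ℝ) : ∀ (l : List SGame) (g : SGame),
    c ≤ minLeft g l ↔ ∀ x ∈ g :: l, c ≤ leftScore x := by
  intro l
  induction l with
  | nil => intro g; rw [minLeft]; simp
  | cons a t ih =>
      intro g; rw [minLeft]
      simp [le_min_iff, ih a]

lemma lt_minLeft_iff (c : ℝ) : ∀ (l : List SGame) (g : SGame),
    c < minLeft g l ↔ ∀ x ∈ g :: l, c < leftScore x := by
  intro l
  induction l with
  | nil => intro g; rw [minLeft]; simp
  | cons a t ih =>
      intro g; rw [minLeft]
      simp [lt_min_iff, ih a]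

lemma le_leftScore_cons_iff (c : ℝ) (g : SGame) (l R : List SGame) (s : ℝ) :
    c ≤ leftScore (mk (g :: l) R s) ↔ ∃ x ∈ g :: l, c ≤ rightScore x := by
  rw [leftScore_cons, le_maxRight_iff]

lemma lt_leftScore_cons_iff (c : ℝ) (g : SGame) (l R : List SGame) (s : ℝ) :
    c < leftScore (mk (g :: l) R s) ↔ ∃ x ∈ g :: l, c < rightScore x := by
  rw [leftScore_cons, lt_maxRight_iff]

lemma le_rightScore_iff (c : ℝ) (L R : List SGame) (s : ℝ) :
    c ≤ rightScore (mk L R s) ↔ ((R = [] → c ≤ s) ∧ ∀ x ∈ R, c ≤ leftScore x) := by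
  cases R with
  | nil => rw [rightScore_nil]; simp
  | cons a t => rw [rightScore_cons, le_minLeft_iff]; simp

lemma lt_rightScore_iff (c : ℝ) (L R : List SGame) (s : ℝ) :
    c < rightScore (mk L R s) ↔ ((R = [] → c < s) ∧ ∀ x ∈ R, c < leftScore x) := by
  cases R with
  | nil => rw [rightScore_nil]; simp
  | cons a t => rw [rightScore_cons, lt_minLeft_iff]; simp

end SGame

namespace SGame

def Pdom (G G' X : SGame) : Prop :=
  (0 ≤ (G.sum X).leftScore ↔ 0 ≤ (G'.sum X).leftScore) ∧
  (0 < (G.sum X).leftScore ↔ 0 < (G'.sum X).leftScore) ∧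
  (0 ≤ (G.sum X).rightScore ↔ 0 ≤ (G'.sum X).rightScore) ∧
  (0 < (G.sum X).rightScore ↔ 0 < (G'.sum X).rightScore)

lemma key (A B : SGame) (L R : List SGame) (s : ℝ) (h : Ge A B) :
    ∀ X : SGame, Pdom (mk (A :: B :: L) R s) (mk (A :: L) R s) X := by
  suffices H : ∀ n : ℕ, ∀ X : SGame, sizeOf X ≤ n →
      Pdom (mk (A :: B :: L) R s) (mk (A :: L) R s) X by
    intro X; exact H (sizeOf X) X le_rfl
  intro n
  induction n with
  | zero =>
      rintro ⟨XL, XR, t⟩ hX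
      simp at hX
  | succ n ih =>
      rintro ⟨XL, XR, t⟩ hX
      have hsz : sizeOf (mk XL XR t) ≤ n + 1 := hX
      have ihm : ∀ x : SGame, x ∈ XL ∨ x ∈ XR →
          Pdom (mk (A :: B :: L) R s) (mk (A :: L) R s) x := by
        intro x hx
        apply ih
        rcases hx with hx | hx <;>
          (have := List.sizeOf_lt_of_mem hx; simp at hsz; omega)
      set X : SGame := mk XL XR t with hXdef
      constructor
      · -- 0 ≤ leftScore
        rw [hXdef, sum_mk, sum_mk]
        simp only [List.map_cons, List.cons_append]
        rw [le_leftScore_cons_iff, le_leftScore_cons_iff, ← hXdef]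
        simp only [List.mem_cons, List.mem_append, List.mem_map, exists_eq_or_imp,
          or_and_right, exists_or, exists_exists_and_eq_and, exists_eq_left]
        constructor
        · rintro (hs | hs | hs | ⟨a, ha, hs⟩)
          · exact Or.inl hs
          · exact Or.inl ((h X).2.1 hs)
          · exact Or.inr (Or.inl hs)
          · exact Or.inr (Or.inr ⟨a, ha, (ihm a (Or.inl ha)).2.2.1.mp hs⟩)
        · rintro (hs | hs | ⟨a, ha, hs⟩)
          · exact Or.inl hs
          · exact Or.inr (Or.inr (Or.inl hs))
          · exact Or.inr (Or.inr (Or.inr ⟨a, ha, (ihm a (Or.inl ha)).2.2.1.mpr hs⟩))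
      constructor
      · -- 0 < leftScore
        rw [hXdef, sum_mk, sum_mk]
        simp only [List.map_cons, List.cons_append]
        rw [lt_leftScore_cons_iff, lt_leftScore_cons_iff, ← hXdef]
        simp only [List.mem_cons, List.mem_append, List.mem_map, exists_eq_or_imp,
          or_and_right, exists_or, exists_exists_and_eq_and, exists_eq_left]
        constructor
        · rintro (hs | hs | hs | ⟨a, ha, hs⟩)
          · exact Or.inl hs
          · exact Or.inl ((h X).2.2.2 hs)
          · exact Or.inr (Or.inl hs)
          · exact Or.inr (Or.inr ⟨a, ha, (ihm a (Or.inl ha)).2.2.2.mp hs⟩)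
        · rintro (hs | hs | ⟨a, ha, hs⟩)
          · exact Or.inl hs
          · exact Or.inr (Or.inr (Or.inl hs))
          · exact Or.inr (Or.inr (Or.inr ⟨a, ha, (ihm a (Or.inl ha)).2.2.2.mpr hs⟩))
      constructor
      · -- 0 ≤ rightScore
        rw [hXdef, sum_mk, sum_mk]
        rw [le_rightScore_iff, le_rightScore_iff, ← hXdef]
        simp only [List.append_eq_nil_iff, List.map_eq_nil_iff, List.forall_mem_append,
          List.forall_mem_map]
        constructor
        · rintro ⟨h0, h1, h2⟩
          exact ⟨h0, h1, fun a ha => (ihm a (Or.inr ha)).1.mp (h2 a ha)⟩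
        · rintro ⟨h0, h1, h2⟩
          exact ⟨h0, h1, fun a ha => (ihm a (Or.inr ha)).1.mpr (h2 a ha)⟩
      · -- 0 < rightScore
        rw [hXdef, sum_mk, sum_mk]
        rw [lt_rightScore_iff, lt_rightScore_iff, ← hXdef]
        simp only [List.append_eq_nil_iff, List.map_eq_nil_iff, List.forall_mem_append,
          List.forall_mem_map]
        constructor
        · rintro ⟨h0, h1, h2⟩
          exact ⟨h0, h1, fun a ha => (ihm a (Or.inr ha)).2.1.mp (h2 a ha)⟩
        · rintro ⟨h0, h1, h2⟩
          exact ⟨h0, h1, fun a ha => (ihm a (Or.inr ha)).2.1.mpr (h2 a ha)⟩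

end SGame

namespace SGame

lemma eq_zero_iff_aux (a : ℝ) : a = 0 ↔ (0 ≤ a ∧ ¬ 0 < a) := by
  constructor
  · rintro rfl; simp
  · rintro ⟨h₁, h₂⟩; exact le_antisymm (not_lt.mp h₂) h₁

lemma outcome_congr {G H : SGame}
    (h1 : 0 ≤ G.leftScore ↔ 0 ≤ H.leftScore)
    (h2 : 0 < G.leftScore ↔ 0 < H.leftScore)
    (h3 : 0 ≤ G.rightScore ↔ 0 ≤ H.rightScore)
    (h4 : 0 < G.rightScore ↔ 0 < H.rightScore) :
    G.outcome = H.outcome := by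
  have e1 : G.leftScore = 0 ↔ H.leftScore = 0 := by
    rw [eq_zero_iff_aux, eq_zero_iff_aux, h1, h2]
  have e2 : G.rightScore = 0 ↔ H.rightScore = 0 := by
    rw [eq_zero_iff_aux, eq_zero_iff_aux, h3, h4]
  unfold outcome
  simp only [h2, e1, h4, e2]

end SGame

/-- Removing a dominated Left option preserves equality: if `A ≥ B` then
`{A, C, … | s | D, E, F, …} = {A, B, C, … | s | D, E, F, …}`. -/
theorem remove_dominated_left (A B : SGame) (Lrest R : List SGame) (s : ℝ)
    (h : SGame.Ge A B) :
    SGame.gameEq (SGame.mk (A :: Lrest) R s) (SGame.mk (A :: B :: Lrest) R s) := by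
  intro X
  obtain ⟨k1, k2, k3, k4⟩ := SGame.key A B Lrest R s h X
  exact SGame.outcome_congr k1.symm k2.symm k3.symm k4.symm
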